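/- Let M > 0, let I ⊆ ℝ be an interval, and let γ = (t, x) : I → ℝ × ℝ³ be a C¹ curve with 0 < ‖x(s)‖ < 2M and Q_M(t'(s), x'(s), x(s)) < 0 for every s ∈ I (a timelike curve in the interior Schwarzschild spacetime). Then ⟨x(s), x'(s)⟩ ≠ 0 for every s ∈ I, the sign of ⟨x(s), x'(s)⟩ is constant on I, and the radial function s ↦ ‖x(s)‖ is strictly monotone on I. -/

import Mathlib

/-- The Schwarzschild quadratic form of mass `M`, evaluated on a velocity `(t', x')`
at a point with spatial part `x` (where `0 < ‖x‖ < 2M`):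
`Q_M(t',x',x) := (2M/‖x‖ − 1)·t'² + ‖x'‖² − (2M/((2M − ‖x‖)·‖x‖²))·⟨x,x'⟩²`. -/
noncomputable def QM (M : ℝ) (t' : ℝ) (x' x : EuclideanSpace ℝ (Fin 3)) : ℝ :=
  (2 * M / ‖x‖ - 1) * t' ^ 2 + ‖x'‖ ^ 2
    - (2 * M / ((2 * M - ‖x‖) * ‖x‖ ^ 2)) * (inner ℝ x x' : ℝ) ^ 2

/-- Let `M > 0`, let `I ⊆ ℝ` be an interval, and let `γ = (t, x) : I → ℝ × ℝ³` be a
C¹ curve with `0 < ‖x(s)‖ < 2M` and `Q_M(t'(s), x'(s), x(s)) < 0` for every `s ∈ I`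
(a timelike curve in the interior Schwarzschild spacetime). Then `⟨x(s), x'(s)⟩ ≠ 0`
for every `s ∈ I`, the sign of `⟨x(s), x'(s)⟩` is constant on `I`, and the radial
function `s ↦ ‖x(s)‖` is strictly monotone on `I`. -/
theorem timelike_radial_strictly_monotone (M : ℝ) (hM : 0 < M)
    (I : Set ℝ) (hI : I.OrdConnected)
    (t t' : ℝ → ℝ) (x x' : ℝ → EuclideanSpace ℝ (Fin 3))
    (ht : ∀ s ∈ I, HasDerivWithinAt t (t' s) I s)
    (hx : ∀ s ∈ I, HasDerivWithinAt x (x' s) I s)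
    (ht'c : ContinuousOn t' I) (hx'c : ContinuousOn x' I)
    (hr : ∀ s ∈ I, 0 < ‖x s‖ ∧ ‖x s‖ < 2 * M)
    (htl : ∀ s ∈ I, QM M (t' s) (x' s) (x s) < 0) :
    (∀ s ∈ I, (inner ℝ (x s) (x' s) : ℝ) ≠ 0) ∧
    ((∀ s ∈ I, (0 : ℝ) < inner ℝ (x s) (x' s)) ∨ (∀ s ∈ I, (inner ℝ (x s) (x' s) : ℝ) < 0)) ∧
    (StrictMonoOn (fun s => ‖x s‖) I ∨ StrictAntiOn (fun s => ‖x s‖) I) := by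
  set f : ℝ → ℝ := fun s => (inner ℝ (x s) (x' s) : ℝ) with hf
  -- Step 1: f never vanishes on I
  have hne : ∀ s ∈ I, f s ≠ 0 := by
    intro s hs h0
    have hQ := htl s hs
    have hr1 := (hr s hs).1
    have hr2 := (hr s hs).2
    have hpos : 0 < 2 * M / ‖x s‖ - 1 := by
      have : (1 : ℝ) < 2 * M / ‖x s‖ := (one_lt_div hr1).mpr hr2
      linarith
    rw [QM] at hQ
    have h0' : (inner ℝ (x s) (x' s) : ℝ) = 0 := h0
    rw [h0'] at hQ
    nlinarith [sq_nonneg (t' s), sq_nonneg ‖x' s‖, sq_nonneg (t' s * Real.sqrt (2 * M / ‖x s‖ - 1))]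
  -- continuity of x and f on I
  have hxc : ContinuousOn x I := fun s hs => (hx s hs).continuousWithinAt
  have hfc : ContinuousOn f I := hxc.inner hx'c
  -- Step 2: sign constancy
  have hsign : (∀ s ∈ I, (0 : ℝ) < f s) ∨ (∀ s ∈ I, f s < 0) := by
    by_contra hcon
    push_neg at hcon
    obtain ⟨⟨a, ha, hfa⟩, ⟨b, hb, hfb⟩⟩ := hcon
    have hfa' : f a < 0 := lt_of_le_of_ne hfa (hne a ha)
    have hfb' : 0 < f b := lt_of_le_of_ne (by linarith [hfb]) (Ne.symm (hne b hb))
    rcases le_total a b with hab | hab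
    · have hsub : Set.Icc a b ⊆ I := hI.out ha hb
      have := intermediate_value_Icc hab (hfc.mono hsub)
      obtain ⟨c, hc, hfc0⟩ := this ⟨hfa'.le, hfb'.le⟩
      exact hne c (hsub hc) hfc0
    · have hsub : Set.Icc b a ⊆ I := hI.out hb ha
      have := intermediate_value_Icc' hab (hfc.mono hsub)
      obtain ⟨c, hc, hfc0⟩ := this ⟨hfa'.le, hfb'.le⟩
      exact hne c (hsub hc) hfc0
  refine ⟨hne, hsign, ?_⟩
  -- Step 3: strict monotonicity of the radius
  set g : ℝ → ℝ := fun s => (inner ℝ (x s) (x s) : ℝ) with hgdef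
  have hg : ∀ s ∈ I, HasDerivWithinAt g (2 * f s) I s := by
    intro s hs
    have h2 := (hx s hs).inner (𝕜 := ℝ) (hx s hs)
    simpa only [hgdef, hf, two_mul, real_inner_comm (x' s) (x s)] using h2
  have hgc : ContinuousOn g I := hxc.inner hxc
  have hconv : Convex ℝ I := hI.convex
  have hderiv : ∀ y ∈ interior I, deriv g y = 2 * f y := by
    intro y hy
    exact ((hg y (interior_subset hy)).hasDerivAt (mem_interior_iff_mem_nhds.mp hy)).deriv
  have hgnorm : ∀ s, g s = ‖x s‖ ^ 2 := fun s => real_inner_self_eq_norm_sq (x s)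
  rcases hsign with hpos | hneg
  · left
    have hmono : StrictMonoOn g I := by
      apply strictMonoOn_of_deriv_pos hconv hgc
      intro y hy
      rw [hderiv y hy]
      have := hpos y (interior_subset hy)
      linarith
    intro a ha b hb hab
    have h := hmono ha hb hab
    rw [hgnorm, hgnorm] at h
    exact lt_of_pow_lt_pow_left₀ 2 (norm_nonneg _) h
  · right
    have hmono : StrictAntiOn g I := by
      apply strictAntiOn_of_deriv_neg hconv hgc
      intro y hy
      rw [hderiv y hy]
      have := hneg y (interior_subset hy)
      linarith
    intro a ha b hb hab
    have h := hmono ha hb hab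
    rw [hgnorm, hgnorm] at h
    exact lt_of_pow_lt_pow_left₀ 2 (norm_nonneg _) h
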